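/- Let G be an FC group and let N be a normal subgroup of finite index in G. Then G'/N' is finite, where G' is the commutator subgroup of G and N' is the commutator subgroup of N. -/

import Mathlib

open Subgroup
open scoped commutatorElement

section Aux

variable {Q : Type*} [Group Q]

lemma centralComm {z : Q} (hz : z ∈ Subgroup.center Q) (a b : Q) :
    ⁅a * z, b⁆ = ⁅a, b⁆ := by
  have hzb : b * z = z * b := Subgroup.mem_center_iff.mp hz b
  have h1 : z * b * z⁻¹ = b := by rw [← hzb, mul_inv_cancel_right]
  calc ⁅a * z, b⁆ = a * (z * b * z⁻¹) * a⁻¹ * b⁻¹ := by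
        rw [commutatorElement_def]; group
    _ = ⁅a, b⁆ := by rw [h1, commutatorElement_def]

lemma centralCommR {z : Q} (hz : z ∈ Subgroup.center Q) (a b : Q) :
    ⁅a, b * z⁆ = ⁅a, b⁆ := by
  rw [← commutatorElement_inv, centralComm hz, commutatorElement_inv]

lemma fc_centralizer_finiteIndex (hFC : ∀ x : Q, (Set.range fun h : Q => h * x * h⁻¹).Finite)
    (x : Q) : (centralizer (zpowers x : Set Q)).FiniteIndex := by
  have horb : (MulAction.orbit (ConjAct Q) x).Finite := by
    refine (hFC x).subset ?_
    rintro y ⟨g, rfl⟩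
    exact ⟨ConjAct.ofConjAct g, (ConjAct.smul_def g x).symm⟩
  have : Finite (Q ⧸ centralizer (zpowers x : Set Q)) := by
    haveI := horb.to_subtype
    have e := (MulAction.orbitEquivQuotientStabilizer (ConjAct Q) x).trans
      (Subgroup.quotientEquivOfEq (ConjAct.stabilizer_eq_centralizer x))
    rw [Subgroup.zpowers_eq_closure, Subgroup.centralizer_closure]
    exact Finite.of_equiv (MulAction.orbit (ConjAct Q) x) e
  exact Subgroup.finiteIndex_of_finite_quotient

lemma schur_fc (hFC : ∀ x : Q, (Set.range fun h : Q => h * x * h⁻¹).Finite)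
    (A : Subgroup Q) [A.FiniteIndex]
    (hA : ∀ a ∈ A, ∀ b ∈ A, a * b = b * a) : Finite (commutator Q) := by
  set Z : Subgroup Q :=
    A ⊓ ⨅ c : Q ⧸ A, centralizer (zpowers ((Quotient.out c : Q)) : Set Q) with hZdef
  haveI : (⨅ c : Q ⧸ A, centralizer (zpowers ((Quotient.out c : Q)) : Set Q)).FiniteIndex :=
    Subgroup.finiteIndex_iInf fun c => fc_centralizer_finiteIndex hFC _
  haveI : Z.FiniteIndex := inferInstance
  have hZ : Z ≤ Subgroup.center Q := by
    intro z hz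
    obtain ⟨hzA, hzC⟩ := hz
    rw [Subgroup.mem_center_iff]
    intro q
    obtain ⟨a, ha⟩ := QuotientGroup.mk_out_eq_mul A q
    have hout : (Quotient.out (QuotientGroup.mk q : Q ⧸ A) : Q) * z =
        z * (Quotient.out (QuotientGroup.mk q : Q ⧸ A) : Q) := by
      have := Subgroup.mem_iInf.mp hzC (QuotientGroup.mk q)
      exact (this _ (Subgroup.mem_zpowers _)).symm ▸
        (this _ (Subgroup.mem_zpowers _))
    have haz : (a : Q) * z = z * a := by
      have h1 := hA z hzA a a.2
      have h2 := hA a a.2 z hzA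
      exact h2
    have hq : q = (Quotient.out (QuotientGroup.mk q : Q ⧸ A) : Q) * (a : Q)⁻¹ := by
      rw [ha]; group
    have hinv : (a : Q)⁻¹ * z = z * (a : Q)⁻¹ := by
      have := hA z hzA _ (A.inv_mem a.2); exact this.symm
    rw [hq]
    calc (Quotient.out (QuotientGroup.mk q : Q ⧸ A) : Q) * (a : Q)⁻¹ * z
        = (Quotient.out (QuotientGroup.mk q : Q ⧸ A) : Q) * (z * (a : Q)⁻¹) := by
          rw [mul_assoc, hinv]
      _ = z * ((Quotient.out (QuotientGroup.mk q : Q ⧸ A) : Q) * (a : Q)⁻¹) := by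
          rw [← mul_assoc, hout, mul_assoc]
  haveI : (Subgroup.center Q).FiniteIndex := Subgroup.finiteIndex_of_le hZ
  haveI : Finite (Q ⧸ Subgroup.center Q) := inferInstance
  have hcs : (commutatorSet Q).Finite := by
    refine (Set.finite_range fun p : (Q ⧸ Subgroup.center Q) × (Q ⧸ Subgroup.center Q) =>
      ⁅(Quotient.out p.1 : Q), (Quotient.out p.2 : Q)⁆).subset ?_
    rintro y ⟨a, b, rfl⟩
    refine ⟨(QuotientGroup.mk a, QuotientGroup.mk b), ?_⟩
    obtain ⟨z₁, hz₁⟩ := QuotientGroup.mk_out_eq_mul (Subgroup.center Q) a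
    obtain ⟨z₂, hz₂⟩ := QuotientGroup.mk_out_eq_mul (Subgroup.center Q) b
    simp only [hz₁, hz₂]
    rw [centralComm z₁.2, centralCommR z₂.2]
  haveI : Finite (commutatorSet Q) := hcs.to_subtype
  infer_instance

end Aux

theorem stmt_5 {G : Type*} [Group G]
    (hFC : ∀ x : G, (Set.range fun h : G => h * x * h⁻¹).Finite)
    (N : Subgroup G) [N.Normal] [N.FiniteIndex]
    [((Subgroup.map N.subtype (commutator ↥N)).subgroupOf (commutator G)).Normal] :
    Finite
      (↥(commutator G) ⧸ ((Subgroup.map N.subtype (commutator ↥N)).subgroupOf (commutator G))) := by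
  set N' : Subgroup G := Subgroup.map N.subtype (commutator ↥N) with hN'def
  haveI hN'norm : N'.Normal := by
    constructor
    intro n hn g
    obtain ⟨m, hm, rfl⟩ := hn
    refine ⟨MulAut.conjNormal g m, ?_, ?_⟩
    · have hchar : (commutator ↥N).Characteristic := inferInstance
      have := Subgroup.characteristic_iff_map_eq.mp hchar (MulAut.conjNormal g)
      rw [← this]
      exact ⟨m, hm, rfl⟩
    · simp [MulAut.conjNormal_apply]
  -- the quotient group
  let π : G →* G ⧸ N' := QuotientGroup.mk' N'
  have hπ : Function.Surjective π := QuotientGroup.mk'_surjective N'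
  -- FC property descends
  have hFCQ : ∀ x : G ⧸ N', (Set.range fun h : G ⧸ N' => h * x * h⁻¹).Finite := by
    intro x
    obtain ⟨g, rfl⟩ := hπ x
    refine ((hFC g).image π).subset ?_
    rintro y ⟨h, rfl⟩
    obtain ⟨k, rfl⟩ := hπ h
    exact ⟨k * g * k⁻¹, ⟨k, rfl⟩, by simp [map_mul]⟩
  -- the image of N is abelian of finite index
  have hker : π.ker ≤ N := by
    rw [QuotientGroup.ker_mk']
    exact Subgroup.map_subtype_le _
  haveI : (N.map π).FiniteIndex := by
    constructor
    rw [Subgroup.index_map_eq _ hπ hker]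
    exact Subgroup.FiniteIndex.index_ne_zero
  have hA : ∀ a ∈ N.map π, ∀ b ∈ N.map π, a * b = b * a := by
    rintro _ ⟨n₁, hn₁, rfl⟩ _ ⟨n₂, hn₂, rfl⟩
    rw [← map_mul, ← map_mul]
    have : (QuotientGroup.mk (n₁ * n₂) : G ⧸ N') = QuotientGroup.mk (n₂ * n₁) := by
      rw [QuotientGroup.eq]
      have : (n₁ * n₂)⁻¹ * (n₂ * n₁) = ⁅n₂⁻¹, n₁⁻¹⁆ := by
        rw [commutatorElement_def]; group
      rw [this]
      refine ⟨⁅(⟨n₂, hn₂⟩ : N)⁻¹, (⟨n₁, hn₁⟩ : N)⁻¹⁆, ?_, ?_⟩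
      · exact Subgroup.commutator_mem_commutator (Subgroup.mem_top _) (Subgroup.mem_top _)
      · simp [commutatorElement_def]
    exact this
  haveI hfin : Finite (commutator (G ⧸ N')) := schur_fc hFCQ (N.map π) hA
  -- first isomorphism theorem
  let φ : ↥(commutator G) →* G ⧸ N' := π.comp (commutator G).subtype
  have hrange : φ.range = commutator (G ⧸ N') := by
    have h1 : φ.range = (commutator G).map π := by
      rw [MonoidHom.range_comp]
      congr 1
      rw [Subgroup.range_subtype]
    rw [h1, _root_.commutator_def, _root_.commutator_def, Subgroup.map_commutator,
      Subgroup.map_top_of_surjective π hπ]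
  have hkerφ : φ.ker = N'.subgroupOf (commutator G) := by
    rw [← MonoidHom.comap_ker, QuotientGroup.ker_mk']
    rfl
  haveI : Finite φ.range := by rw [hrange]; infer_instance
  rw [← hkerφ]
  exact Finite.of_equiv _ (QuotientGroup.quotientKerEquivRange φ).symm.toEquiv
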